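/- For integers m, n divisible by 5 with m, n ≥ 5, the toroidal grid C_m □ C_n satisfies γ_{[k]R}(C_m □ C_n) = (k+1)·mn/5 for every k ≥ 1. -/

import Mathlib

open SimpleGraph Finset
open scoped Classical

/-- Closed neighborhood of a vertex. -/
def closedNbr {V : Type*} (G : SimpleGraph V) (v : V) : Set V :=
  insert v (G.neighborSet v)

/-- `S` is an efficient dominating set: every vertex lies in the closed
neighborhood of exactly one vertex of `S`. -/
def IsEffDomSet {V : Type*} (G : SimpleGraph V) (S : Set V) : Prop :=
  ∀ v : V, ∃! u, u ∈ S ∧ v ∈ closedNbr G u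

/-- `S` is a dominating set. -/
def IsDomSet {V : Type*} (G : SimpleGraph V) (S : Set V) : Prop :=
  ∀ v : V, v ∉ S → ∃ u ∈ S, G.Adj u v

/-- The domination number. -/
noncomputable def domNumber {V : Type*} (G : SimpleGraph V) [Fintype V] : ℕ :=
  sInf {n | ∃ S : Set V, IsDomSet G S ∧ S.ncard = n}

/-- `f` is a `[k]`-Roman dominating function on `G`. -/
noncomputable def IsKRDF {V : Type*} (G : SimpleGraph V) [Fintype V] (k : ℕ) (f : V → ℕ) : Prop :=
  (∀ v, f v ≤ k + 1) ∧
  ∀ v : V, f v < k →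
    f v + ∑ u ∈ univ.filter (fun u => G.Adj v u), f u ≥
      k + (univ.filter (fun u => G.Adj v u ∧ 0 < f u)).card

/-- The `[k]`-Roman domination number. -/
noncomputable def kRoman {V : Type*} (G : SimpleGraph V) [Fintype V] (k : ℕ) : ℕ :=
  sInf {w | ∃ f : V → ℕ, IsKRDF G k f ∧ ∑ v, f v = w}

/-- `S` is a packing: closed neighborhoods of vertices in `S` are pairwise disjoint. -/
def IsPacking {V : Type*} (G : SimpleGraph V) (S : Set V) : Prop :=
  S.Pairwise fun u v => Disjoint (closedNbr G u) (closedNbr G v)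

/-- The packing number. -/
noncomputable def packingNumber {V : Type*} (G : SimpleGraph V) [Fintype V] : ℕ :=
  sSup {n | ∃ S : Set V, IsPacking G S ∧ S.ncard = n}

namespace KAux
variable {m n : ℕ}

variable {m n : ℕ}
open Fin.CommRing

lemma adj5 (a b : Fin (m + 5)) : (cycleGraph (m + 5)).Adj a b ↔ b = a - 1 ∨ b = a + 1 := by
  rw [cycleGraph_adj (n := m + 3)]
  constructor
  · rintro (h | h)
    · exact Or.inl (by linear_combination -h)
    · exact Or.inr (by linear_combination h)
  · rintro (rfl | rfl)
    · exact Or.inl (by ring)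
    · exact Or.inr (by ring)

lemma val_add_one (a : Fin (m + 5)) : (a + 1).val = (a.val + 1) % (m + 5) := by
  rw [Fin.add_def, Fin.val_one]

lemma val_sub_one (a : Fin (m + 5)) : (a - 1).val = (m + 4 + a.val) % (m + 5) := by
  rw [Fin.sub_def]
  simp

lemma add_one_ne (a : Fin (m + 5)) : a + 1 ≠ a := by
  intro h
  have h2 : (1 : Fin (m + 5)) = 0 := by linear_combination h
  have := congrArg Fin.val h2
  simp at this

lemma sub_one_ne (a : Fin (m + 5)) : a - 1 ≠ a := by
  intro h
  have h2 : (1 : Fin (m + 5)) = 0 := by linear_combination -h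
  have := congrArg Fin.val h2
  simp at this

lemma sub_one_ne_add_one (a : Fin (m + 5)) : a - 1 ≠ a + 1 := by
  intro h
  have h2 : ((1 : Fin (m + 5)) + 1) = 0 := by linear_combination -h
  have := congrArg Fin.val h2
  rw [val_add_one, Fin.val_one, Fin.val_zero] at this
  rw [Nat.mod_eq_of_lt (by omega)] at this
  omega


abbrev G5 (m n : ℕ) : SimpleGraph (Fin (m + 5) × Fin (n + 5)) :=
  (cycleGraph (m + 5)).boxProd (cycleGraph (n + 5))

lemma nbr_eq (v : Fin (m + 5) × Fin (n + 5)) :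
    univ.filter (fun u => (G5 m n).Adj v u) =
      {(v.1 - 1, v.2), (v.1 + 1, v.2), (v.1, v.2 - 1), (v.1, v.2 + 1)} := by
  ext u
  simp only [mem_filter, mem_univ, true_and, mem_insert, mem_singleton,
    boxProd_adj, adj5, Prod.ext_iff]
  constructor
  · rintro (⟨h | h, h2⟩ | ⟨h | h, h2⟩) <;> simp [h, h2.symm]
  · rintro (⟨h1, h2⟩ | ⟨h1, h2⟩ | ⟨h1, h2⟩ | ⟨h1, h2⟩)
    · exact Or.inl ⟨Or.inl h1, h2.symm⟩
    · exact Or.inl ⟨Or.inr h1, h2.symm⟩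
    · exact Or.inr ⟨Or.inl h2, h1.symm⟩
    · exact Or.inr ⟨Or.inr h2, h1.symm⟩

lemma nbr_card (v : Fin (m + 5) × Fin (n + 5)) :
    (univ.filter (fun u => (G5 m n).Adj v u)).card = 4 := by
  rw [nbr_eq]
  rw [card_insert_of_notMem, card_insert_of_notMem, card_insert_of_notMem,
    card_singleton]
  · simp [Prod.ext_iff, sub_one_ne_add_one v.2]
  · simp [Prod.ext_iff, (add_one_ne v.1)]
  · simp [Prod.ext_iff, sub_one_ne_add_one v.1, (sub_one_ne v.1)]

lemma sum_nbr (g : Fin (m + 5) × Fin (n + 5) → ℕ) :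
    ∑ v, ∑ u ∈ univ.filter (fun u => (G5 m n).Adj v u), g u = 4 * ∑ v, g v := by
  have h1 : ∀ v : Fin (m + 5) × Fin (n + 5),
      ∑ u ∈ univ.filter (fun u => (G5 m n).Adj v u), g u
        = ∑ u, if (G5 m n).Adj v u then g u else 0 := fun v => sum_filter _ _
  simp only [h1]
  rw [Finset.sum_comm]
  rw [Finset.mul_sum]
  refine Finset.sum_congr rfl fun u _ => ?_
  have h2 : ∀ v : Fin (m + 5) × Fin (n + 5), (G5 m n).Adj v u ↔ (G5 m n).Adj u v :=
    fun v => (G5 m n).adj_comm v u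
  calc ∑ v, (if (G5 m n).Adj v u then g u else 0)
      = ∑ v ∈ univ.filter (fun v => (G5 m n).Adj u v), g u := by
        rw [← sum_filter]
        apply Finset.sum_congr
        · apply Finset.filter_congr; intro v _; simpa using h2 v
        · intros; rfl
    _ = 4 * g u := by rw [Finset.sum_const, nbr_card, smul_eq_mul]



set_option maxHeartbeats 1000000 in
lemma lower (k : ℕ) (hk : 1 ≤ k) (f : Fin (m + 5) × Fin (n + 5) → ℕ)
    (hf : IsKRDF (G5 m n) k f) :
    (k + 1) * ((m + 5) * (n + 5)) ≤ 5 * ∑ v, f v := by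
  classical
  set N : Fin (m + 5) × Fin (n + 5) → Finset (Fin (m + 5) × Fin (n + 5)) :=
    fun v => univ.filter (fun u => (G5 m n).Adj v u) with hNdef
  set F : Fin (m + 5) × Fin (n + 5) → ℕ := fun v => f v + ∑ u ∈ N v, f u with hFdef
  set P : Fin (m + 5) × Fin (n + 5) → ℕ :=
    fun v => ((N v).filter (fun u => 0 < f u)).card with hPdef
  have cond : ∀ v, f v < k → k + P v ≤ F v := by
    intro v hv
    have h := hf.2 v hv
    have hP : P v = (univ.filter (fun u => (G5 m n).Adj v u ∧ 0 < f u)).card := by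
      show ((univ.filter (fun u => (G5 m n).Adj v u)).filter (fun u => 0 < f u)).card = _
      rw [Finset.filter_filter]
    rw [hP]
    show k + _ ≤ f v + ∑ u ∈ univ.filter (fun u => (G5 m n).Adj v u), f u
    exact h
  have hsymm : ∀ u v, u ∈ N v ↔ v ∈ N u := by
    intro u v
    simp only [hNdef, mem_filter, mem_univ, true_and]
    exact (G5 m n).adj_comm v u
  have hbad : ∀ v, F v ≤ k → f v = k ∧ ∀ u ∈ N v, f u = 0 := by
    intro v hv
    by_cases hlt : f v < k
    · exfalso
      have h := cond v hlt
      have hP : P v = 0 := by omega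
      have hz : ∀ u ∈ N v, f u = 0 := by
        intro u hu
        by_contra hu0
        have h1 : u ∈ (N v).filter (fun u => 0 < f u) := mem_filter.2 ⟨hu, by omega⟩
        have h2 : 0 < P v := Finset.card_pos.2 ⟨u, h1⟩
        omega
      have hFv : F v = f v := by
        have h0 : ∑ u ∈ N v, f u = 0 := Finset.sum_eq_zero hz
        show f v + ∑ u ∈ N v, f u = f v
        rw [h0]
        omega
      omega
    · have h2 : F v = f v + ∑ u ∈ N v, f u := rfl
      have h3 : f v = k ∧ ∑ u ∈ N v, f u = 0 := by omega
      exact ⟨h3.1, fun u hu => (Finset.sum_eq_zero_iff).1 h3.2 u hu⟩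
  set B : Fin (m + 5) × Fin (n + 5) → ℕ :=
    fun u => ((N u).filter (fun w => F w ≤ k)).card with hBdef
  have hzero : ∀ u w, w ∈ N u → F w ≤ k → f u = 0 := by
    intro u w hw hFw
    exact (hbad w hFw).2 u ((hsymm w u).1 hw)
  have claim : ∀ u, k + 1 ≤ F u → (B u : ℤ) ≤ 4 * ((F u : ℤ) - (k + 1)) := by
    intro u hu
    by_cases hB : B u = 0
    · omega
    · obtain ⟨w, hw⟩ := Finset.card_pos.1 (Nat.pos_of_ne_zero hB)
      rw [mem_filter] at hw
      have hfu : f u = 0 := hzero u w hw.1 hw.2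
      have hcond := cond u (by omega)
      have hBP : B u ≤ P u := by
        apply Finset.card_le_card
        intro x hx
        rw [mem_filter] at hx ⊢
        exact ⟨hx.1, by have := (hbad x hx.2).1; omega⟩
      by_cases hEq : B u = P u
      · rcases Nat.lt_or_ge (B u) 2 with h2 | h2
        · exfalso
          have hB1 : B u = 1 := by omega
          have hsub : (N u).filter (fun w => F w ≤ k) ⊆ (N u).filter (fun w => 0 < f w) := by
            intro x hx
            rw [mem_filter] at hx ⊢
            exact ⟨hx.1, by have := (hbad x hx.2).1; omega⟩
          have hcards : ((N u).filter (fun w => 0 < f w)).card ≤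
              ((N u).filter (fun w => F w ≤ k)).card := by
            have e1 : ((N u).filter (fun w => 0 < f w)).card = P u := rfl
            have e2 : ((N u).filter (fun w => F w ≤ k)).card = B u := rfl
            omega
          have heq : (N u).filter (fun w => 0 < f w) = (N u).filter (fun w => F w ≤ k) :=
            (Finset.eq_of_subset_of_card_le hsub hcards).symm
          obtain ⟨w0, hw0⟩ := Finset.card_eq_one.1 hB1
          have hw0' : w0 ∈ (N u).filter (fun w => F w ≤ k) := by
            rw [hw0]; exact mem_singleton_self w0
          rw [mem_filter] at hw0'
          have hfw0 : f w0 = k := (hbad w0 hw0'.2).1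
          have hsum : ∑ x ∈ N u, f x = k := by
            rw [← Finset.sum_filter_add_sum_filter_not (N u) (fun w => 0 < f w)]
            have e1 : ∑ x ∈ (N u).filter (fun w => 0 < f w), f x = k := by
              rw [heq, hw0, Finset.sum_singleton, hfw0]
            have e2 : ∑ x ∈ (N u).filter (fun w => ¬ 0 < f w), f x = 0 :=
              Finset.sum_eq_zero fun x hx => by
                rw [mem_filter] at hx; omega
            omega
          have hFu : F u = k := by
            show f u + ∑ x ∈ N u, f x = k
            rw [hfu, hsum]
            omega
          omega
        · omega
      · omega
  have hBbad : ∀ u, F u ≤ k → B u = 0 := by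
    intro u hu
    show ((N u).filter (fun w => F w ≤ k)).card = 0
    rw [Finset.card_eq_zero, Finset.filter_eq_empty_iff]
    intro w hw hFw
    have h1 : f w = 0 := (hbad u hu).2 w hw
    have h2 : f w = k := (hbad w hFw).1
    omega
  have htot : ∑ u, B u = 4 * (univ.filter (fun v => F v ≤ k)).card := by
    have h1 : ∀ u, B u = ∑ w ∈ N u, (if F w ≤ k then 1 else 0) := by
      intro u; exact Finset.card_filter _ _
    calc ∑ u, B u = ∑ u, ∑ w ∈ N u, (if F w ≤ k then 1 else 0) := by
          exact Finset.sum_congr rfl fun u _ => h1 u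
      _ = 4 * ∑ v, (if F v ≤ k then 1 else 0) := sum_nbr _
      _ = 4 * (univ.filter (fun v => F v ≤ k)).card := by
          rw [Finset.card_filter]
  -- assemble in ℤ
  have hsplitB : ∑ u, (B u : ℤ) =
      ∑ u ∈ univ.filter (fun v => F v ≤ k), (B u : ℤ)
        + ∑ u ∈ univ.filter (fun v => ¬ F v ≤ k), (B u : ℤ) :=
    (Finset.sum_filter_add_sum_filter_not univ _ _).symm
  have hBad0 : ∑ u ∈ univ.filter (fun v => F v ≤ k), (B u : ℤ) = 0 := by
    apply Finset.sum_eq_zero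
    intro u hu
    rw [mem_filter] at hu
    rw [hBbad u hu.2]
    norm_num
  have htotZ : ∑ u, (B u : ℤ) = 4 * ((univ.filter (fun v => F v ≤ k)).card : ℤ) := by
    exact_mod_cast htot
  have hGoodB : ∑ u ∈ univ.filter (fun v => ¬ F v ≤ k), (B u : ℤ)
      ≤ ∑ u ∈ univ.filter (fun v => ¬ F v ≤ k), (4 * ((F u : ℤ) - (k + 1))) := by
    apply Finset.sum_le_sum
    intro u hu
    rw [mem_filter] at hu
    exact claim u (by omega)
  have hGoodLB : ((univ.filter (fun v => F v ≤ k)).card : ℤ)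
      ≤ ∑ u ∈ univ.filter (fun v => ¬ F v ≤ k), ((F u : ℤ) - (k + 1)) := by
    rw [← Finset.mul_sum] at hGoodB
    linarith [hGoodB, hsplitB, hBad0, htotZ]
  have hFbadsum : ∑ v ∈ univ.filter (fun v => F v ≤ k), (F v : ℤ)
      = (k : ℤ) * ((univ.filter (fun v => F v ≤ k)).card : ℤ) := by
    rw [Finset.sum_congr rfl (fun v hv => ?_), Finset.sum_const, nsmul_eq_mul, mul_comm]
    rw [mem_filter] at hv
    obtain ⟨h1, h2⟩ := hbad v hv.2
    have h0 : ∑ u ∈ N v, f u = 0 := Finset.sum_eq_zero h2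
    have hFv : F v = k := by
      show f v + ∑ u ∈ N v, f u = k
      rw [h0, h1]
      omega
    exact_mod_cast hFv
  have hGoodsum : ∑ v ∈ univ.filter (fun v => ¬ F v ≤ k), (F v : ℤ)
      = ((k : ℤ) + 1) * ((univ.filter (fun v => ¬ F v ≤ k)).card : ℤ)
        + ∑ v ∈ univ.filter (fun v => ¬ F v ≤ k), ((F v : ℤ) - (k + 1)) := by
    rw [Finset.sum_sub_distrib, Finset.sum_const, nsmul_eq_mul]
    ring
  have hcards : ((univ.filter (fun v => F v ≤ k)).card : ℤ)
      + ((univ.filter (fun v => ¬ F v ≤ k)).card : ℤ) = ((m + 5) * (n + 5) : ℕ) := by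
    have := Finset.card_filter_add_card_filter_not (s := univ)
      (p := fun v : Fin (m + 5) × Fin (n + 5) => F v ≤ k)
    have hcu : (univ : Finset (Fin (m + 5) × Fin (n + 5))).card = (m + 5) * (n + 5) := by
      simp [Finset.card_univ]
    exact_mod_cast by omega
  have hsplitF : ∑ v, (F v : ℤ) =
      ∑ v ∈ univ.filter (fun v => F v ≤ k), (F v : ℤ)
        + ∑ v ∈ univ.filter (fun v => ¬ F v ≤ k), (F v : ℤ) :=
    (Finset.sum_filter_add_sum_filter_not univ _ _).symm
  have main : ((k : ℤ) + 1) * (((m + 5) * (n + 5) : ℕ) : ℤ) ≤ ∑ v, (F v : ℤ) := by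
    set Bc := ((univ.filter (fun v => F v ≤ k)).card : ℤ)
    set Gc := ((univ.filter (fun v => ¬ F v ≤ k)).card : ℤ)
    have e1 : ((k : ℤ) + 1) * (((m + 5) * (n + 5) : ℕ) : ℤ) = (k + 1) * Bc + (k + 1) * Gc := by
      rw [← hcards]; ring
    have e2 : ((k : ℤ) + 1) * Bc = k * Bc + Bc := by ring
    linarith [hGoodLB, hFbadsum, hGoodsum, hsplitF]
  have hFsum : ∑ v, F v = 5 * ∑ v, f v := by
    show ∑ v, (f v + ∑ u ∈ N v, f u) = 5 * ∑ v, f v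
    rw [Finset.sum_add_distrib]
    rw [show (∑ v, ∑ u ∈ N v, f u) = 4 * ∑ v, f v from sum_nbr f]
    ring
  have hFsumZ : ∑ v, (F v : ℤ) = 5 * ∑ v, (f v : ℤ) := by
    rw [← Nat.cast_sum, hFsum]
    push_cast
    rfl
  rw [hFsumZ] at main
  exact_mod_cast main


lemma count_mod (t s : ℕ) (hs : s < 5) :
    (Finset.filter (fun x => x % 5 = s) (Finset.range (5 * t))).card = t := by
  have h := Finset.card_bij' (s := Finset.filter (fun x => x % 5 = s) (Finset.range (5 * t)))
    (t := Finset.range t) (fun x _ => x / 5) (fun q _ => 5 * q + s)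
    (fun a ha => by simp only [mem_filter, mem_range] at ha ⊢; omega)
    (fun a ha => by simp only [mem_range] at ha; simp only [mem_filter, mem_range]; omega)
    (fun a ha => by simp only [mem_filter, mem_range] at ha; omega)
    (fun a ha => by simp only [mem_range] at ha; omega)
  rw [h, Finset.card_range]

lemma count_fin (i : ℕ) (hn5 : 5 ∣ (n + 5)) :
    (univ.filter (fun j : Fin (n + 5) => (i + 2 * j.val) % 5 = 0)).card = (n + 5) / 5 := by
  obtain ⟨t, ht⟩ := hn5
  rw [Finset.card_filter]
  rw [Fin.sum_univ_eq_sum_range (fun x => if (i + 2 * x) % 5 = 0 then 1 else 0)]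
  rw [← Finset.card_filter]
  have hcong : Finset.filter (fun x => (i + 2 * x) % 5 = 0) (Finset.range (n + 5))
      = Finset.filter (fun x => x % 5 = (3 * (10 - i % 5)) % 5) (Finset.range (n + 5)) := by
    apply Finset.filter_congr
    intro x _
    constructor <;> intro h <;> omega
  rw [hcong, ht, count_mod t _ (by omega)]
  omega

lemma card_code (hm5 : 5 ∣ (m + 5)) (hn5 : 5 ∣ (n + 5)) :
    (univ.filter (fun v : Fin (m + 5) × Fin (n + 5) => (v.1.val + 2 * v.2.val) % 5 = 0)).card
      = (m + 5) * ((n + 5) / 5) := by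
  rw [Finset.card_filter, Fintype.sum_prod_type]
  have h : ∀ i : Fin (m + 5),
      (∑ j : Fin (n + 5), if ((i.val + 2 * j.val) % 5 = 0) then 1 else 0) = (n + 5) / 5 := by
    intro i
    rw [← Finset.card_filter]
    exact count_fin i.val hn5
  rw [Finset.sum_congr rfl (fun i _ => h i), Finset.sum_const, card_univ, Fintype.card_fin,
    smul_eq_mul]

lemma mod5l (hm5 : 5 ∣ (m + 5)) (a b : ℕ) : ((a % (m + 5)) + b) % 5 = (a + b) % 5 := by
  conv_rhs => rw [Nat.add_mod]
  rw [Nat.add_mod, Nat.mod_mod_of_dvd a hm5]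

lemma mod5r (hn5 : 5 ∣ (n + 5)) (a b : ℕ) : (a + 2 * (b % (n + 5))) % 5 = (a + 2 * b) % 5 := by
  conv_rhs => rw [Nat.add_mod, Nat.mul_mod]
  rw [Nat.add_mod, Nat.mul_mod, Nat.mod_mod_of_dvd b hn5]

lemma upper (k : ℕ) (hk : 1 ≤ k) (hm5 : 5 ∣ (m + 5)) (hn5 : 5 ∣ (n + 5)) :
    ∃ f : Fin (m + 5) × Fin (n + 5) → ℕ, IsKRDF (G5 m n) k f ∧
      ∑ v, f v = (k + 1) * ((m + 5) * ((n + 5) / 5)) := by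
  classical
  set f : Fin (m + 5) × Fin (n + 5) → ℕ :=
    fun v => if (v.1.val + 2 * v.2.val) % 5 = 0 then k + 1 else 0 with hfdef
  have hfval : ∀ v, f v = if (v.1.val + 2 * v.2.val) % 5 = 0 then k + 1 else 0 := fun v => rfl
  have hfcases : ∀ v, f v = k + 1 ∨ f v = 0 := by
    intro v; rw [hfval]; split <;> simp
  have hfpos : ∀ v, 0 < f v → f v = k + 1 := by
    intro v hv; rcases hfcases v with h | h <;> omega
  refine ⟨f, ⟨fun v => by rcases hfcases v with h | h <;> omega, ?_⟩, ?_⟩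
  · intro v hv
    have hvne : (v.1.val + 2 * v.2.val) % 5 ≠ 0 := by
      intro h
      rw [hfval v, if_pos h] at hv
      omega
    have hfv : f v = 0 := by rw [hfval v, if_neg hvne]
    obtain ⟨u0, hadj, hc0⟩ : ∃ u0, (G5 m n).Adj v u0 ∧ (u0.1.val + 2 * u0.2.val) % 5 = 0 := by
      have hr5 : (v.1.val + 2 * v.2.val) % 5 < 5 := by omega
      have hr : (v.1.val + 2 * v.2.val) % 5 = 1 ∨ (v.1.val + 2 * v.2.val) % 5 = 2
          ∨ (v.1.val + 2 * v.2.val) % 5 = 3 ∨ (v.1.val + 2 * v.2.val) % 5 = 4 := by omega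
      rcases hr with hr | hr | hr | hr
      · refine ⟨(v.1 - 1, v.2), ?_, ?_⟩
        · exact boxProd_adj.2 (Or.inl ⟨(adj5 v.1 (v.1 - 1)).2 (Or.inl rfl), rfl⟩)
        · show ((v.1 - 1).val + 2 * v.2.val) % 5 = 0
          rw [val_sub_one, mod5l hm5]
          omega
      · refine ⟨(v.1, v.2 - 1), ?_, ?_⟩
        · exact boxProd_adj.2 (Or.inr ⟨(adj5 v.2 (v.2 - 1)).2 (Or.inl rfl), rfl⟩)
        · show (v.1.val + 2 * (v.2 - 1).val) % 5 = 0
          rw [val_sub_one, mod5r hn5]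
          omega
      · refine ⟨(v.1, v.2 + 1), ?_, ?_⟩
        · exact boxProd_adj.2 (Or.inr ⟨(adj5 v.2 (v.2 + 1)).2 (Or.inr rfl), rfl⟩)
        · show (v.1.val + 2 * (v.2 + 1).val) % 5 = 0
          rw [val_add_one, mod5r hn5]
          omega
      · refine ⟨(v.1 + 1, v.2), ?_, ?_⟩
        · exact boxProd_adj.2 (Or.inl ⟨(adj5 v.1 (v.1 + 1)).2 (Or.inr rfl), rfl⟩)
        · show ((v.1 + 1).val + 2 * v.2.val) % 5 = 0
          rw [val_add_one, mod5l hm5]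
          omega
    have hu0pos : 0 < f u0 := by rw [hfval u0, if_pos hc0]; omega
    have hcard1 : 1 ≤ (univ.filter (fun u => (G5 m n).Adj v u ∧ 0 < f u)).card :=
      Finset.card_pos.2 ⟨u0, mem_filter.2 ⟨mem_univ _, hadj, hu0pos⟩⟩
    have hsub : univ.filter (fun u => (G5 m n).Adj v u ∧ 0 < f u)
        ⊆ univ.filter (fun u => (G5 m n).Adj v u) := by
      intro x hx; rw [mem_filter] at hx ⊢; exact ⟨hx.1, hx.2.1⟩
    have hsumS : ∑ u ∈ univ.filter (fun u => (G5 m n).Adj v u ∧ 0 < f u), f u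
        = (k + 1) * (univ.filter (fun u => (G5 m n).Adj v u ∧ 0 < f u)).card := by
      rw [Finset.sum_congr rfl (fun u hu => hfpos u (mem_filter.1 hu).2.2),
        Finset.sum_const, smul_eq_mul, mul_comm]
    have hsumN : ∑ u ∈ univ.filter (fun u => (G5 m n).Adj v u ∧ 0 < f u), f u
        ≤ ∑ u ∈ univ.filter (fun u => (G5 m n).Adj v u), f u :=
      Finset.sum_le_sum_of_subset hsub
    have hmul : k * 1 ≤ k * (univ.filter (fun u => (G5 m n).Adj v u ∧ 0 < f u)).card :=
      Nat.mul_le_mul_left k hcard1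
    have hring : (k + 1) * (univ.filter (fun u => (G5 m n).Adj v u ∧ 0 < f u)).card
        = k * (univ.filter (fun u => (G5 m n).Adj v u ∧ 0 < f u)).card
          + (univ.filter (fun u => (G5 m n).Adj v u ∧ 0 < f u)).card := by ring
    omega
  · calc ∑ v, f v = ∑ v ∈ univ.filter
          (fun v : Fin (m + 5) × Fin (n + 5) => (v.1.val + 2 * v.2.val) % 5 = 0), (k + 1) := by
          rw [Finset.sum_filter]
    _ = (k + 1) * ((m + 5) * ((n + 5) / 5)) := by
          rw [Finset.sum_const, smul_eq_mul, mul_comm, card_code hm5 hn5]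


end KAux

theorem stmt2 (m n k : ℕ) (hm5 : 5 ∣ m) (hn5 : 5 ∣ n) (hm : 5 ≤ m) (hn : 5 ≤ n)
    (hk : 1 ≤ k) :
    (kRoman ((cycleGraph m).boxProd (cycleGraph n)) k : ℚ) = (k + 1) * m * n / 5 := by
  obtain ⟨m', rfl⟩ : ∃ m', m = m' + 5 := ⟨m - 5, by omega⟩
  obtain ⟨n', rfl⟩ : ∃ n', n = n' + 5 := ⟨n - 5, by omega⟩
  classical
  obtain ⟨f, hf, hsum⟩ := KAux.upper (m := m') (n := n') k hk hm5 hn5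
  have hup : kRoman ((cycleGraph (m' + 5)).boxProd (cycleGraph (n' + 5))) k
      ≤ (k + 1) * ((m' + 5) * ((n' + 5) / 5)) :=
    Nat.sInf_le ⟨f, hf, hsum⟩
  have hne : {w | ∃ f : Fin (m' + 5) × Fin (n' + 5) → ℕ,
      IsKRDF ((cycleGraph (m' + 5)).boxProd (cycleGraph (n' + 5))) k f ∧ ∑ v, f v = w}.Nonempty := by
    refine ⟨∑ _v : Fin (m' + 5) × Fin (n' + 5), (k + 1), fun _ => k + 1,
      ⟨fun v => le_refl _, fun v hv => absurd hv (by show ¬ (k + 1 < k); omega)⟩, rfl⟩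
  have hmem := Nat.sInf_mem hne
  obtain ⟨g, hg, hgsum⟩ := hmem
  have hlow : (k + 1) * ((m' + 5) * (n' + 5))
      ≤ 5 * kRoman ((cycleGraph (m' + 5)).boxProd (cycleGraph (n' + 5))) k := by
    have hgsum' : ∑ v, g v = kRoman ((cycleGraph (m' + 5)).boxProd (cycleGraph (n' + 5))) k := hgsum
    rw [← hgsum']
    exact KAux.lower k hk g hg
  have hdiv : 5 * ((n' + 5) / 5) = n' + 5 := Nat.mul_div_cancel' hn5
  have h5up : 5 * kRoman ((cycleGraph (m' + 5)).boxProd (cycleGraph (n' + 5))) k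
      ≤ (k + 1) * ((m' + 5) * (n' + 5)) := by
    calc 5 * kRoman ((cycleGraph (m' + 5)).boxProd (cycleGraph (n' + 5))) k
        ≤ 5 * ((k + 1) * ((m' + 5) * ((n' + 5) / 5))) := by gcongr
      _ = (k + 1) * ((m' + 5) * (5 * ((n' + 5) / 5))) := by ring
      _ = (k + 1) * ((m' + 5) * (n' + 5)) := by rw [hdiv]
  have key : 5 * kRoman ((cycleGraph (m' + 5)).boxProd (cycleGraph (n' + 5))) k
      = (k + 1) * ((m' + 5) * (n' + 5)) := le_antisymm h5up hlow
  have keyQ : (5 : ℚ) * (kRoman ((cycleGraph (m' + 5)).boxProd (cycleGraph (n' + 5))) k : ℚ)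
      = ((k : ℚ) + 1) * (((m' : ℚ) + 5) * ((n' : ℚ) + 5)) := by exact_mod_cast key
  rw [eq_div_iff (by norm_num : (5 : ℚ) ≠ 0)]
  push_cast
  linarith
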